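/- Let x, y be real numbers with 0 < y ≤ x and x + y < 1, and set h = √(xy/((1−x)(1−y))). Then −2/(1−h) − 2/(1+h) + (1−x)/(y+(1−x)h) + (1−y)/(x+(1−y)h) − (1−x)/(x+(1−x)h) − (1−y)/(y+(1−y)h) = −4(1−x)(1−y)/(1−x−y). Equivalently, the logarithmic derivative ∂_η log α(η) at η = h equals −4(1−x)(1−y)/(1−x−y), where α(η) = (1−η)²(y+(1−x)η)(x+(1−y)η) / ((1+η)²(x+(1−x)η)(y+(1−y)η)). -/

import Mathlib

set_option maxHeartbeats 1000000


/-- with `h = √(xy/((1−x)(1−y)))`,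
`−2/(1−h) − 2/(1+h) + (1−x)/(y+(1−x)h) + (1−y)/(x+(1−y)h) − (1−x)/(x+(1−x)h)
− (1−y)/(y+(1−y)h) = −4(1−x)(1−y)/(1−x−y)`; equivalently, the logarithmic
derivative `∂_η log α(η)` at `η = h` equals `−4(1−x)(1−y)/(1−x−y)`, where
`α(η) = (1−η)²(y+(1−x)η)(x+(1−y)η)/((1+η)²(x+(1−x)η)(y+(1−y)η))`. -/
theorem log_alpha_deriv_at_h (x y : ℝ)
    (hy : 0 < y) (hyx : y ≤ x) (hxy : x + y < 1) :
    (-2 / (1 - Real.sqrt (x * y / ((1 - x) * (1 - y))))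
        - 2 / (1 + Real.sqrt (x * y / ((1 - x) * (1 - y))))
        + (1 - x) / (y + (1 - x) * Real.sqrt (x * y / ((1 - x) * (1 - y))))
        + (1 - y) / (x + (1 - y) * Real.sqrt (x * y / ((1 - x) * (1 - y))))
        - (1 - x) / (x + (1 - x) * Real.sqrt (x * y / ((1 - x) * (1 - y))))
        - (1 - y) / (y + (1 - y) * Real.sqrt (x * y / ((1 - x) * (1 - y))))
      = -4 * (1 - x) * (1 - y) / (1 - x - y)) ∧
    deriv
        (fun η : ℝ => Real.log
          ((1 - η) ^ 2 * (y + (1 - x) * η) * (x + (1 - y) * η) /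
            ((1 + η) ^ 2 * (x + (1 - x) * η) * (y + (1 - y) * η))))
        (Real.sqrt (x * y / ((1 - x) * (1 - y))))
      = -4 * (1 - x) * (1 - y) / (1 - x - y) := by
  have hx : 0 < x := lt_of_lt_of_le hy hyx
  have hx1 : (0:ℝ) < 1 - x := by linarith
  have hy1 : (0:ℝ) < 1 - y := by linarith
  have hxy1 : (0:ℝ) < 1 - x - y := by linarith
  set s := Real.sqrt (x * y / ((1 - x) * (1 - y))) with hs
  have harg : 0 < x * y / ((1 - x) * (1 - y)) := by positivity
  have hs0 : 0 < s := Real.sqrt_pos.mpr harg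
  have hsq : s ^ 2 = x * y / ((1 - x) * (1 - y)) := Real.sq_sqrt harg.le
  have key : (1 - x) * (1 - y) * s ^ 2 = x * y := by
    rw [hsq]; field_simp
  have hs1 : s < 1 := by
    by_contra hcon
    push_neg at hcon
    have hss : (1:ℝ) ≤ s ^ 2 := by nlinarith
    have h2 : (1 - x) * (1 - y) ≤ (1 - x) * (1 - y) * s ^ 2 := by
      nlinarith [mul_nonneg (mul_nonneg hx1.le hy1.le) (sub_nonneg.mpr hss)]
    nlinarith
  have d1 : (0:ℝ) < 1 - s := by linarith
  have d2 : (0:ℝ) < 1 + s := by linarith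
  have d3 : (0:ℝ) < y + (1 - x) * s := by positivity
  have d4 : (0:ℝ) < x + (1 - y) * s := by positivity
  have d5 : (0:ℝ) < x + (1 - x) * s := by positivity
  have d6 : (0:ℝ) < y + (1 - y) * s := by positivity
  have e1 : -2 / (1 - s) - 2 / (1 + s) = -4 * (1 - x) * (1 - y) / (1 - x - y) := by
    rw [div_sub_div _ _ d1.ne' d2.ne', div_eq_div_iff (by positivity) hxy1.ne']
    linear_combination (-4:ℝ) * key
  have e2 : (1 - x) / (y + (1 - x) * s) + (1 - y) / (x + (1 - y) * s)
      - (1 - x) / (x + (1 - x) * s) - (1 - y) / (y + (1 - y) * s) = 0 := by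
    rw [div_add_div _ _ d3.ne' d4.ne', div_sub_div _ _ (by positivity) d5.ne',
      div_sub_div _ _ (by positivity) d6.ne', div_eq_iff (by positivity)]
    linear_combination ((x - y) ^ 2) * key
  have part1 : -2 / (1 - s) - 2 / (1 + s)
      + (1 - x) / (y + (1 - x) * s) + (1 - y) / (x + (1 - y) * s)
      - (1 - x) / (x + (1 - x) * s) - (1 - y) / (y + (1 - y) * s)
      = -4 * (1 - x) * (1 - y) / (1 - x - y) := by
    linear_combination e1 + e2
  refine ⟨part1, ?_⟩
  -- derivative part
  have h1 : HasDerivAt (fun η : ℝ => 1 - η) (-1) s := by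
    simpa using (hasDerivAt_id s).const_sub 1
  have h1' : HasDerivAt (fun η : ℝ => 1 + η) 1 s := by
    simpa using (hasDerivAt_id s).const_add 1
  have h2 : HasDerivAt (fun η : ℝ => y + (1 - x) * η) (1 - x) s := by
    simpa using ((hasDerivAt_id s).const_mul (1 - x)).const_add y
  have h3 : HasDerivAt (fun η : ℝ => x + (1 - y) * η) (1 - y) s := by
    simpa using ((hasDerivAt_id s).const_mul (1 - y)).const_add x
  have h4 : HasDerivAt (fun η : ℝ => x + (1 - x) * η) (1 - x) s := by
    simpa using ((hasDerivAt_id s).const_mul (1 - x)).const_add x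
  have h5 : HasDerivAt (fun η : ℝ => y + (1 - y) * η) (1 - y) s := by
    simpa using ((hasDerivAt_id s).const_mul (1 - y)).const_add y
  have hN : HasDerivAt (fun η : ℝ => (1 - η) ^ 2 * (y + (1 - x) * η) * (x + (1 - y) * η))
      (((2 * (1 - s) ^ 1 * (-1)) * (y + (1 - x) * s) + (1 - s) ^ 2 * (1 - x)) * (x + (1 - y) * s)
        + (1 - s) ^ 2 * (y + (1 - x) * s) * (1 - y)) s :=
    ((h1.pow 2).mul h2).mul h3
  have hD : HasDerivAt (fun η : ℝ => (1 + η) ^ 2 * (x + (1 - x) * η) * (y + (1 - y) * η))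
      (((2 * (1 + s) ^ 1 * 1) * (x + (1 - x) * s) + (1 + s) ^ 2 * (1 - x)) * (y + (1 - y) * s)
        + (1 + s) ^ 2 * (x + (1 - x) * s) * (1 - y)) s :=
    ((h1'.pow 2).mul h4).mul h5
  have hDne : (1 + s) ^ 2 * (x + (1 - x) * s) * (y + (1 - y) * s) ≠ 0 := by positivity
  have hQ : HasDerivAt (fun η : ℝ => (1 - η) ^ 2 * (y + (1 - x) * η) * (x + (1 - y) * η) /
      ((1 + η) ^ 2 * (x + (1 - x) * η) * (y + (1 - y) * η))) _ s := hN.div hD hDne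
  have hNne : (1 - s) ^ 2 * (y + (1 - x) * s) * (x + (1 - y) * s) ≠ 0 := by positivity
  have hQne : (1 - s) ^ 2 * (y + (1 - x) * s) * (x + (1 - y) * s) /
      ((1 + s) ^ 2 * (x + (1 - x) * s) * (y + (1 - y) * s)) ≠ 0 :=
    div_ne_zero hNne hDne
  have hL := hQ.log hQne
  rw [hL.deriv, ← part1]
  field_simp
  ring
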